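/- Let P = conv{(0,0), (7,0), (7,3), (1,3), (0,2)} ⊂ ℝ² (a convex pentagon) and let L = ([0,1] × [0,3]) ∪ ([1,2] × [0,1]) ⊂ ℝ² (an L-tetromino of area 4). Then (i) the area (2-dimensional Lebesgue measure) of P equals 41/2; and (ii) there exist isometries f₁, …, f₅ of ℝ² such that the sets f₁(L), …, f₅(L) are contained in P and have pairwise disjoint interiors. Consequently the five mutually congruent pieces cover area 20 of P, leaving uncovered area exactly 1/2. -/

import Mathlib

open MeasureTheory Set

noncomputable abbrev E2 : Type := EuclideanSpace ℝ (Fin 2)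

noncomputable def pt (x y : ℝ) : E2 := !₂[x, y]
@[simp] lemma pt_zero (x y : ℝ) : pt x y 0 = x := rfl
@[simp] lemma pt_one (x y : ℝ) : pt x y 1 = y := rfl

lemma pt_eta (p : E2) : pt (p 0) (p 1) = p := by
  ext i; fin_cases i <;> rfl

lemma pt_congr {a b c d : ℝ} (h1 : a = c) (h2 : b = d) : pt a b = pt c d := by
  rw [h1, h2]

lemma invol {e x : ℝ} (he : e ^ 2 = 1) : e * (e * x) = x := by linear_combination x * he
lemma invol' {e x c : ℝ} (he : e ^ 2 = 1) : e * (e * (x - c)) + c = x := by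
  linear_combination (x - c) * he

lemma dist_pt (p q : E2) : dist p q =
    Real.sqrt ((p 0 - q 0) ^ 2 + (p 1 - q 1) ^ 2) := by
  rw [EuclideanSpace.dist_eq, Fin.sum_univ_two]
  simp [Real.dist_eq, sq_abs]

/-- The isometry `p ↦ (ε p₁ + c, δ p₀ + d)` of the Euclidean plane (for `ε, δ = ±1`). -/
noncomputable def isoSwap (ε δ c d : ℝ) (hε : ε ^ 2 = 1) (hδ : δ ^ 2 = 1) : E2 ≃ᵢ E2 where
  toFun p := pt (ε * p 1 + c) (δ * p 0 + d)
  invFun q := pt (δ * (q 1 - d)) (ε * (q 0 - c))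
  left_inv p := by
    ext i; fin_cases i <;> simp [pt, invol hε, invol hδ, invol' hε, invol' hδ]
  right_inv q := by
    ext i; fin_cases i <;> simp [pt, invol hε, invol hδ, invol' hε, invol' hδ]
  isometry_toFun := by
    apply Isometry.of_dist_eq
    intro p q
    rw [dist_pt, dist_pt]
    simp only [pt_zero, pt_one]
    congr 1
    nlinarith [sq_nonneg (p 0 - q 0), sq_nonneg (p 1 - q 1)]

/-- The isometry `p ↦ (ε p₀ + c, δ p₁ + d)` of the Euclidean plane (for `ε, δ = ±1`). -/
noncomputable def isoId (ε δ c d : ℝ) (hε : ε ^ 2 = 1) (hδ : δ ^ 2 = 1) : E2 ≃ᵢ E2 where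
  toFun p := pt (ε * p 0 + c) (δ * p 1 + d)
  invFun q := pt (ε * (q 0 - c)) (δ * (q 1 - d))
  left_inv p := by
    ext i; fin_cases i <;> simp [pt, invol hε, invol hδ, invol' hε, invol' hδ]
  right_inv q := by
    ext i; fin_cases i <;> simp [pt, invol hε, invol hδ, invol' hε, invol' hδ]
  isometry_toFun := by
    apply Isometry.of_dist_eq
    intro p q
    rw [dist_pt, dist_pt]
    simp only [pt_zero, pt_one]
    congr 1
    nlinarith [sq_nonneg (p 0 - q 0), sq_nonneg (p 1 - q 1)]

lemma isoSwap_symm_apply (ε δ c d : ℝ) (hε : ε ^ 2 = 1) (hδ : δ ^ 2 = 1) (q : E2) :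
    (isoSwap ε δ c d hε hδ).symm q = pt (δ * (q 1 - d)) (ε * (q 0 - c)) := rfl
lemma isoId_symm_apply (ε δ c d : ℝ) (hε : ε ^ 2 = 1) (hδ : δ ^ 2 = 1) (q : E2) :
    (isoId ε δ c d hε hδ).symm q = pt (ε * (q 0 - c)) (δ * (q 1 - d)) := rfl

/-- The five isometries of Friedman's layout. -/
noncomputable def fam : Fin 5 → (E2 ≃ᵢ E2)
  | 0 => isoSwap 1 1 0 0 (by norm_num) (by norm_num)
  | 1 => isoSwap 1 1 1 1 (by norm_num) (by norm_num)
  | 2 => isoSwap (-1) (-1) 5 3 (by norm_num) (by norm_num)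
  | 3 => isoSwap (-1) 1 6 0 (by norm_num) (by norm_num)
  | 4 => isoId (-1) (-1) 7 3 (by norm_num) (by norm_num)

def piece0 : Set E2 :=
  {p | (0 ≤ p 0 ∧ p 0 ≤ 3 ∧ 0 ≤ p 1 ∧ p 1 ≤ 1) ∨ (0 ≤ p 0 ∧ p 0 ≤ 1 ∧ 1 ≤ p 1 ∧ p 1 ≤ 2)}
def piece1 : Set E2 :=
  {p | (1 ≤ p 0 ∧ p 0 ≤ 4 ∧ 1 ≤ p 1 ∧ p 1 ≤ 2) ∨ (1 ≤ p 0 ∧ p 0 ≤ 2 ∧ 2 ≤ p 1 ∧ p 1 ≤ 3)}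
def piece2 : Set E2 :=
  {p | (2 ≤ p 0 ∧ p 0 ≤ 5 ∧ 2 ≤ p 1 ∧ p 1 ≤ 3) ∨ (4 ≤ p 0 ∧ p 0 ≤ 5 ∧ 1 ≤ p 1 ∧ p 1 ≤ 2)}
def piece3 : Set E2 :=
  {p | (3 ≤ p 0 ∧ p 0 ≤ 6 ∧ 0 ≤ p 1 ∧ p 1 ≤ 1) ∨ (5 ≤ p 0 ∧ p 0 ≤ 6 ∧ 1 ≤ p 1 ∧ p 1 ≤ 2)}
def piece4 : Set E2 :=
  {p | (6 ≤ p 0 ∧ p 0 ≤ 7 ∧ 0 ≤ p 1 ∧ p 1 ≤ 3) ∨ (5 ≤ p 0 ∧ p 0 ≤ 6 ∧ 2 ≤ p 1 ∧ p 1 ≤ 3)}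

section Images

variable (L : Set E2)

lemma mem_image_iso (g : E2 ≃ᵢ E2) (p : E2) : p ∈ g '' L ↔ g.symm p ∈ L :=
  ⟨by rintro ⟨x, hx, rfl⟩; simpa, fun h => ⟨g.symm p, h, by simp⟩⟩

variable (hL : L = {p : EuclideanSpace ℝ (Fin 2) |
                 p 0 ∈ Set.Icc (0 : ℝ) 1 ∧ p 1 ∈ Set.Icc (0 : ℝ) 3} ∪
              {p : EuclideanSpace ℝ (Fin 2) |
                 p 0 ∈ Set.Icc (1 : ℝ) 2 ∧ p 1 ∈ Set.Icc (0 : ℝ) 1})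

include hL

lemma image0 : fam 0 '' L = piece0 := by
  ext p
  rw [mem_image_iso]
  simp only [fam, piece0, hL, Set.mem_union, Set.mem_setOf_eq, Set.mem_Icc, and_assoc,
    isoSwap_symm_apply, isoId_symm_apply, pt_zero, pt_one]
  constructor <;> rintro (⟨h1, h2, h3, h4⟩ | ⟨h1, h2, h3, h4⟩) <;>
    first
      | exact Or.inl ⟨by linarith, by linarith, by linarith, by linarith⟩
      | exact Or.inr ⟨by linarith, by linarith, by linarith, by linarith⟩

lemma image1 : fam 1 '' L = piece1 := by
  ext p
  rw [mem_image_iso]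
  simp only [fam, piece1, hL, Set.mem_union, Set.mem_setOf_eq, Set.mem_Icc, and_assoc,
    isoSwap_symm_apply, isoId_symm_apply, pt_zero, pt_one]
  constructor <;> rintro (⟨h1, h2, h3, h4⟩ | ⟨h1, h2, h3, h4⟩) <;>
    first
      | exact Or.inl ⟨by linarith, by linarith, by linarith, by linarith⟩
      | exact Or.inr ⟨by linarith, by linarith, by linarith, by linarith⟩

lemma image2 : fam 2 '' L = piece2 := by
  ext p
  rw [mem_image_iso]
  simp only [fam, piece2, hL, Set.mem_union, Set.mem_setOf_eq, Set.mem_Icc, and_assoc,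
    isoSwap_symm_apply, isoId_symm_apply, pt_zero, pt_one]
  constructor <;> rintro (⟨h1, h2, h3, h4⟩ | ⟨h1, h2, h3, h4⟩) <;>
    first
      | exact Or.inl ⟨by linarith, by linarith, by linarith, by linarith⟩
      | exact Or.inr ⟨by linarith, by linarith, by linarith, by linarith⟩

lemma image3 : fam 3 '' L = piece3 := by
  ext p
  rw [mem_image_iso]
  simp only [fam, piece3, hL, Set.mem_union, Set.mem_setOf_eq, Set.mem_Icc, and_assoc,
    isoSwap_symm_apply, isoId_symm_apply, pt_zero, pt_one]
  constructor <;> rintro (⟨h1, h2, h3, h4⟩ | ⟨h1, h2, h3, h4⟩) <;>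
    first
      | exact Or.inl ⟨by linarith, by linarith, by linarith, by linarith⟩
      | exact Or.inr ⟨by linarith, by linarith, by linarith, by linarith⟩

lemma image4 : fam 4 '' L = piece4 := by
  ext p
  rw [mem_image_iso]
  simp only [fam, piece4, hL, Set.mem_union, Set.mem_setOf_eq, Set.mem_Icc, and_assoc,
    isoSwap_symm_apply, isoId_symm_apply, pt_zero, pt_one]
  constructor <;> rintro (⟨h1, h2, h3, h4⟩ | ⟨h1, h2, h3, h4⟩) <;>
    first
      | exact Or.inl ⟨by linarith, by linarith, by linarith, by linarith⟩
      | exact Or.inr ⟨by linarith, by linarith, by linarith, by linarith⟩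

lemma cover (p : E2) (h0 : 0 ≤ p 0) (h7 : p 0 ≤ 7) (h1 : 0 ≤ p 1) (h3 : p 1 ≤ 3)
    (hor : p 1 ≤ 2 ∨ 1 ≤ p 0) : ∃ i : Fin 5, p ∈ fam i '' L := by
  rcases le_or_gt (p 1) 2 with h2 | h2
  · rcases le_total (p 1) 1 with hy | hy
    · rcases le_total (p 0) 3 with hx | hx
      · exact ⟨0, by rw [image0 L hL]; exact Or.inl ⟨h0, hx, h1, hy⟩⟩
      · rcases le_total (p 0) 6 with hx2 | hx2
        · exact ⟨3, by rw [image3 L hL]; exact Or.inl ⟨by linarith, hx2, h1, hy⟩⟩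
        · exact ⟨4, by rw [image4 L hL]; exact Or.inl ⟨by linarith, h7, h1, h3⟩⟩
    · rcases le_total (p 0) 1 with hx | hx
      · exact ⟨0, by rw [image0 L hL]; exact Or.inr ⟨h0, hx, hy, h2⟩⟩
      · rcases le_total (p 0) 4 with hx2 | hx2
        · exact ⟨1, by rw [image1 L hL]; exact Or.inl ⟨hx, hx2, hy, h2⟩⟩
        · rcases le_total (p 0) 5 with hx3 | hx3
          · exact ⟨2, by rw [image2 L hL]; exact Or.inr ⟨hx2, hx3, hy, h2⟩⟩
          · rcases le_total (p 0) 6 with hx4 | hx4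
            · exact ⟨3, by rw [image3 L hL]; exact Or.inr ⟨hx3, hx4, hy, h2⟩⟩
            · exact ⟨4, by rw [image4 L hL]; exact Or.inl ⟨hx4, h7, h1, h3⟩⟩
  · have hx1 : 1 ≤ p 0 := hor.resolve_left (by linarith)
    rcases le_total (p 0) 2 with hx | hx
    · exact ⟨1, by rw [image1 L hL]; exact Or.inr ⟨hx1, hx, by linarith, h3⟩⟩
    · rcases le_total (p 0) 5 with hx2 | hx2
      · exact ⟨2, by rw [image2 L hL]; exact Or.inl ⟨hx, hx2, by linarith, h3⟩⟩
      · rcases le_total (p 0) 6 with hx3 | hx3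
        · exact ⟨4, by rw [image4 L hL]; exact Or.inr ⟨hx2, hx3, by linarith, h3⟩⟩
        · exact ⟨4, by rw [image4 L hL]; exact Or.inl ⟨hx3, h7, h1, h3⟩⟩

end Images

lemma comboPt (x1 y1 x2 y2 t : ℝ) :
    (1 - t) • (pt x1 y1) + t • (pt x2 y2)
      = pt ((1 - t) * x1 + t * x2) ((1 - t) * y1 + t * y2) := by
  ext i; fin_cases i <;>
    simp [pt, PiLp.add_apply, PiLp.smul_apply, smul_eq_mul]


def Sset : Set E2 := {p | 0 ≤ p 0 ∧ p 0 ≤ 7 ∧ 0 ≤ p 1 ∧ p 1 ≤ 3 ∧ p 1 ≤ p 0 + 2}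

lemma mem_seg {u v z : E2} {s : Set E2} (hs : Convex ℝ s) (hu : u ∈ s) (hv : v ∈ s)
    (t : ℝ) (h0 : 0 ≤ t) (h1 : t ≤ 1) (hz : (1 - t) • u + t • v = z) : z ∈ s := by
  have : z ∈ segment ℝ u v := ⟨1 - t, t, by linarith, h0, by ring, hz⟩
  exact hs.segment_subset hu hv this

lemma hull_eq :
    convexHull ℝ {!₂[0, 0], !₂[7, 0], !₂[7, 3], !₂[1, 3], !₂[0, 2]} = Sset := by
  apply Subset.antisymm
  · apply convexHull_min
    · intro q hq
      simp only [Set.mem_insert_iff, Set.mem_singleton_iff] at hq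
      rcases hq with rfl | rfl | rfl | rfl | rfl <;>
        exact ⟨by norm_num, by norm_num, by norm_num, by norm_num, by norm_num⟩
    · intro x hx y hy a b ha hb hab
      obtain ⟨x1, x2, x3, x4, x5⟩ := hx
      obtain ⟨y1, y2, y3, y4, y5⟩ := hy
      have e0 : (a • x + b • y) 0 = a * x 0 + b * y 0 := by
        simp [PiLp.add_apply, PiLp.smul_apply, smul_eq_mul]
      have e1 : (a • x + b • y) 1 = a * x 1 + b * y 1 := by
        simp [PiLp.add_apply, PiLp.smul_apply, smul_eq_mul]
      refine ⟨?_, ?_, ?_, ?_, ?_⟩ <;> simp only [e0, e1]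
      · nlinarith
      · nlinarith
      · nlinarith
      · nlinarith
      · nlinarith
  · intro p hp
    obtain ⟨h0, h7, hy0, hy3, hc⟩ := hp
    have hcx : Convex ℝ (convexHull ℝ ({!₂[0, 0], !₂[7, 0], !₂[7, 3], !₂[1, 3], !₂[0, 2]} : Set E2)) :=
      convex_convexHull ℝ _
    have m0 : (!₂[0, 0] : E2) ∈ convexHull ℝ ({!₂[0, 0], !₂[7, 0], !₂[7, 3], !₂[1, 3], !₂[0, 2]} : Set E2) :=
      subset_convexHull ℝ _ (by simp)
    have m1 : (!₂[7, 0] : E2) ∈ convexHull ℝ ({!₂[0, 0], !₂[7, 0], !₂[7, 3], !₂[1, 3], !₂[0, 2]} : Set E2) :=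
      subset_convexHull ℝ _ (by simp)
    have m2 : (!₂[7, 3] : E2) ∈ convexHull ℝ ({!₂[0, 0], !₂[7, 0], !₂[7, 3], !₂[1, 3], !₂[0, 2]} : Set E2) :=
      subset_convexHull ℝ _ (by simp)
    have m3 : (!₂[1, 3] : E2) ∈ convexHull ℝ ({!₂[0, 0], !₂[7, 0], !₂[7, 3], !₂[1, 3], !₂[0, 2]} : Set E2) :=
      subset_convexHull ℝ _ (by simp)
    have m4 : (!₂[0, 2] : E2) ∈ convexHull ℝ ({!₂[0, 0], !₂[7, 0], !₂[7, 3], !₂[1, 3], !₂[0, 2]} : Set E2) :=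
      subset_convexHull ℝ _ (by simp)
    have hB : pt 7 (p 1) ∈ convexHull ℝ ({!₂[0, 0], !₂[7, 0], !₂[7, 3], !₂[1, 3], !₂[0, 2]} : Set E2) := by
      refine mem_seg hcx m1 m2 (p 1 / 3) (by linarith) (by linarith) ?_
      show (1 - p 1 / 3) • (pt 7 0) + (p 1 / 3) • (pt 7 3) = _
      rw [comboPt]; exact pt_congr (by ring) (by ring)
    rcases le_total (p 1) 2 with hy2 | hy2
    · have hA : pt 0 (p 1) ∈ convexHull ℝ ({!₂[0, 0], !₂[7, 0], !₂[7, 3], !₂[1, 3], !₂[0, 2]} : Set E2) := by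
        refine mem_seg hcx m0 m4 (p 1 / 2) (by linarith) (by linarith) ?_
        show (1 - p 1 / 2) • (pt 0 0) + (p 1 / 2) • (pt 0 2) = _
        rw [comboPt]; exact pt_congr (by ring) (by ring)
      refine mem_seg hcx hA hB (p 0 / 7) (by linarith) (by linarith) ?_
      rw [comboPt]; conv_rhs => rw [← pt_eta p]
      exact pt_congr (by ring) (by ring)
    · have hA : pt (p 1 - 2) (p 1) ∈ convexHull ℝ ({!₂[0, 0], !₂[7, 0], !₂[7, 3], !₂[1, 3], !₂[0, 2]} : Set E2) := by
        refine mem_seg hcx m4 m3 (p 1 - 2) (by linarith) (by linarith) ?_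
        show (1 - (p 1 - 2)) • (pt 0 2) + (p 1 - 2) • (pt 1 3) = _
        rw [comboPt]; exact pt_congr (by ring) (by ring)
      have hden : (0:ℝ) < 9 - p 1 := by linarith
      refine mem_seg hcx hA hB ((p 0 - (p 1 - 2)) / (9 - p 1)) ?_ ?_ ?_
      · apply div_nonneg (by linarith) (by linarith)
      · rw [div_le_one hden]; linarith
      · rw [comboPt]; conv_rhs => rw [← pt_eta p]
        refine pt_congr ?_ ?_ <;> field_simp <;> ring

namespace Fr

def diag : Set (ℝ × ℝ) := {q | q.2 = q.1 + 2}
def tset : Set (ℝ × ℝ) := {q | 0 ≤ q.1 ∧ q.1 < 1 ∧ 2 < q.2 ∧ q.2 ≤ q.1 + 2}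
def uset : Set (ℝ × ℝ) := {q | 0 ≤ q.1 ∧ q.2 ≤ 3 ∧ q.1 + 2 < q.2}
def sset : Set (ℝ × ℝ) := {q | 0 ≤ q.1 ∧ q.1 ≤ 7 ∧ 0 ≤ q.2 ∧ q.2 ≤ 3 ∧ q.2 ≤ q.1 + 2}

noncomputable def g (q : ℝ × ℝ) : ℝ × ℝ := (q.2 - 2, q.1 + 2)

lemma g_mp : MeasurePreserving g := by
  have h1 : MeasurePreserving (Prod.map (fun x : ℝ => x + (-2)) (fun y : ℝ => y + 2))
      (volume.prod volume) (volume.prod volume) :=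
    (measurePreserving_add_right volume (-2)).prod (measurePreserving_add_right volume 2)
  have h2 : MeasurePreserving (Prod.swap : ℝ × ℝ → ℝ × ℝ)
      (volume.prod volume) (volume.prod volume) := Measure.measurePreserving_swap
  have h3 := h1.comp h2
  rw [Measure.volume_eq_prod]
  have : g = (Prod.map (fun x : ℝ => x + (-2)) (fun y : ℝ => y + 2)) ∘ Prod.swap := by
    funext q
    show (q.2 - 2, q.1 + 2) = (q.2 + (-2), q.1 + 2)
    constructor
  rw [this]; exact h3

lemma diag_meas : MeasurableSet diag :=
  measurableSet_eq_fun measurable_snd (measurable_fst.add_const 2)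

lemma diag_null : volume diag = 0 := by
  rw [Measure.volume_eq_prod, Measure.measure_prod_null diag_meas]
  refine ae_of_all _ fun x => ?_
  have h : (Prod.mk x ⁻¹' diag) = {x + 2} := by
    ext y; simp [diag, Set.mem_singleton_iff]
  show volume (Prod.mk x ⁻¹' diag) = 0
  rw [h]; exact Real.volume_singleton

lemma tset_meas : MeasurableSet tset :=
  ((measurableSet_le measurable_const measurable_fst).inter
    ((measurableSet_lt measurable_fst measurable_const).inter
      ((measurableSet_lt measurable_const measurable_snd).inter
        (measurableSet_le measurable_snd (measurable_fst.add_const 2)))))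

lemma uset_meas : MeasurableSet uset :=
  ((measurableSet_le measurable_const measurable_fst).inter
    ((measurableSet_le measurable_snd measurable_const).inter
      (measurableSet_lt (measurable_fst.add_const 2) measurable_snd)))

lemma sset_meas : MeasurableSet sset :=
  ((measurableSet_le measurable_const measurable_fst).inter
    ((measurableSet_le measurable_fst measurable_const).inter
      ((measurableSet_le measurable_const measurable_snd).inter
        ((measurableSet_le measurable_snd measurable_const).inter
          (measurableSet_le measurable_snd (measurable_fst.add_const 2))))))

lemma vol_square : volume (Icc (0:ℝ) 1 ×ˢ Icc (2:ℝ) 3) = 1 := by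
  rw [Measure.volume_eq_prod, Measure.prod_prod, Real.volume_Icc, Real.volume_Icc]
  norm_num

lemma vol_osquare : volume (Ioo (0:ℝ) 1 ×ˢ Ioo (2:ℝ) 3) = 1 := by
  rw [Measure.volume_eq_prod, Measure.prod_prod, Real.volume_Ioo, Real.volume_Ioo]
  norm_num

lemma half_of_double {v : ENNReal} (hfin : v ≠ ⊤) (h : v + v = 1) : v = 1 / 2 := by
  have h1 : v.toReal + v.toReal = 1 := by
    rw [← ENNReal.toReal_add hfin hfin, h]; simp
  have h2 : v.toReal = 1 / 2 := by linarith
  have := ENNReal.ofReal_toReal hfin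
  rw [← this, h2]
  rw [ENNReal.ofReal_div_of_pos (by norm_num)]
  norm_num

lemma vol_uset : volume uset = 1 / 2 := by
  set u' : Set (ℝ × ℝ) := g ⁻¹' uset with hu'
  have hmeas' : MeasurableSet u' := uset_meas.preimage g_mp.measurable
  have hvol' : volume u' = volume uset := g_mp.measure_preimage uset_meas.nullMeasurableSet
  have hdisj : Disjoint uset u' := by
    rw [Set.disjoint_left]
    rintro q ⟨h1, h2, h3⟩ hq
    have : g q ∈ uset := hq
    obtain ⟨h4, h5, h6⟩ := this
    simp only [g] at h4 h5 h6
    linarith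
  have hsub : uset ∪ u' ⊆ Icc (0:ℝ) 1 ×ˢ Icc (2:ℝ) 3 := by
    rintro q (⟨h1, h2, h3⟩ | hq)
    · exact ⟨⟨h1, by linarith⟩, by constructor <;> linarith⟩
    · obtain ⟨h4, h5, h6⟩ := hq
      simp only [g] at h4 h5 h6
      exact ⟨⟨by linarith, by linarith⟩, ⟨by linarith, by linarith⟩⟩
  have hsup : Ioo (0:ℝ) 1 ×ˢ Ioo (2:ℝ) 3 \ diag ⊆ uset ∪ u' := by
    rintro q ⟨⟨⟨a1, a2⟩, a3, a4⟩, hnd⟩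
    have hne : q.2 ≠ q.1 + 2 := hnd
    rcases lt_or_gt_of_ne hne with h | h
    · right
      show g q ∈ uset
      exact ⟨by simp [g]; linarith, by simp [g]; linarith, by simp [g]; linarith⟩
    · left; exact ⟨by linarith, by linarith, by linarith⟩
  have hub : volume (uset ∪ u') ≤ 1 := by
    calc volume (uset ∪ u') ≤ volume (Icc (0:ℝ) 1 ×ˢ Icc (2:ℝ) 3) := measure_mono hsub
    _ = 1 := vol_square
  have hlb : 1 ≤ volume (uset ∪ u') := by
    have h1 : volume (Ioo (0:ℝ) 1 ×ˢ Ioo (2:ℝ) 3 \ diag) ≤ volume (uset ∪ u') :=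
      measure_mono hsup
    have h2 : volume (Ioo (0:ℝ) 1 ×ˢ Ioo (2:ℝ) 3 \ diag)
        = volume (Ioo (0:ℝ) 1 ×ˢ Ioo (2:ℝ) 3) := measure_diff_null diag_null
    rw [h2, vol_osquare] at h1
    exact h1
  have hsum : volume uset + volume u' = volume (uset ∪ u') :=
    (measure_union hdisj hmeas').symm
  have hone : volume (uset ∪ u') = 1 := le_antisymm hub hlb
  have hfin : volume uset ≠ ⊤ := by
    intro h
    rw [hone] at hsum
    rw [h] at hsum
    simp at hsum
  apply half_of_double hfin
  rw [hvol'] at hsum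
  rw [hsum, hone]

lemma vol_box : volume (Icc (0:ℝ) 7 ×ˢ Icc (0:ℝ) 3) = 21 := by
  rw [Measure.volume_eq_prod, Measure.prod_prod, Real.volume_Icc, Real.volume_Icc]
  rw [← ENNReal.ofReal_mul (by norm_num)]
  norm_num

lemma vol_tset : volume tset = 1 / 2 := by
  set t' : Set (ℝ × ℝ) := g ⁻¹' tset with ht'
  have hmeas' : MeasurableSet t' := tset_meas.preimage g_mp.measurable
  have hvol' : volume t' = volume tset := g_mp.measure_preimage tset_meas.nullMeasurableSet
  have hcap : tset ∩ t' ⊆ diag := by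
    rintro q ⟨⟨a1, a2, a3, a4⟩, hq⟩
    have hb : g q ∈ tset := hq
    obtain ⟨b1, b2, b3, b4⟩ := hb
    simp only [g] at b1 b2 b3 b4
    show q.2 = q.1 + 2
    linarith
  have hsub : tset ∪ t' ⊆ Icc (0:ℝ) 1 ×ˢ Icc (2:ℝ) 3 := by
    rintro q (⟨a1, a2, a3, a4⟩ | hq)
    · exact ⟨⟨a1, by linarith⟩, by linarith, by linarith⟩
    · have hb : g q ∈ tset := hq
      obtain ⟨b1, b2, b3, b4⟩ := hb
      simp only [g] at b1 b2 b3 b4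
      exact ⟨⟨by linarith, by linarith⟩, by linarith, by linarith⟩
  have hsup : Ioo (0:ℝ) 1 ×ˢ Ioo (2:ℝ) 3 ⊆ tset ∪ t' := by
    rintro q ⟨⟨a1, a2⟩, a3, a4⟩
    rcases le_or_gt q.2 (q.1 + 2) with h | h
    · left; exact ⟨by linarith, a2, a3, h⟩
    · right
      show g q ∈ tset
      exact ⟨by show (0:ℝ) ≤ q.2 - 2; linarith, by show q.2 - 2 < 1; linarith,
        by show (2:ℝ) < q.1 + 2; linarith, by show q.1 + 2 ≤ q.2 - 2 + 2; linarith⟩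
  have hub : volume (tset ∪ t') ≤ 1 :=
    le_trans (measure_mono hsub) (le_of_eq vol_square)
  have hlb : 1 ≤ volume (tset ∪ t') :=
    le_trans (le_of_eq vol_osquare.symm) (measure_mono hsup)
  have hone : volume (tset ∪ t') = 1 := le_antisymm hub hlb
  have hcap0 : volume (tset ∩ t') = 0 :=
    le_antisymm (le_trans (measure_mono hcap) (le_of_eq diag_null)) (zero_le)
  have hsum := measure_union_add_inter (μ := volume) tset hmeas'
  rw [hone, hcap0, hvol'] at hsum
  have hfin : volume tset ≠ ⊤ := by
    intro h; rw [h] at hsum; simp at hsum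
  apply half_of_double hfin
  rw [← hsum]; simp

lemma vol_sset : volume sset = 41 / 2 := by
  have hdisj : Disjoint sset uset := by
    rw [Set.disjoint_left]
    rintro q ⟨a1, a2, a3, a4, a5⟩ ⟨b1, b2, b3⟩
    linarith
  have hun : sset ∪ uset = Icc (0:ℝ) 7 ×ˢ Icc (0:ℝ) 3 := by
    apply Subset.antisymm
    · rintro q (⟨a1, a2, a3, a4, a5⟩ | ⟨b1, b2, b3⟩)
      · exact ⟨⟨a1, a2⟩, a3, a4⟩
      · exact ⟨⟨b1, by linarith⟩, by linarith, b2⟩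
    · rintro ⟨x, y⟩ ⟨⟨a1, a2⟩, a3, a4⟩
      rcases le_or_gt y (x + 2) with h | h
      · exact Or.inl ⟨a1, a2, a3, a4, h⟩
      · exact Or.inr ⟨a1, a4, h⟩
  have hsum : volume sset + volume uset = 21 := by
    rw [← measure_union hdisj uset_meas, hun, vol_box]
  rw [vol_uset] at hsum
  have hfin : volume sset ≠ ⊤ := by
    have hle : volume sset ≤ 21 := by
      refine le_trans (measure_mono ?_) (le_of_eq vol_box)
      rw [← hun]; exact subset_union_left
    exact ne_top_of_le_ne_top (by simp) hle
  have h1 : (volume sset).toReal + (1/2 : ENNReal).toReal = 21 := by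
    rw [← ENNReal.toReal_add hfin (by norm_num), hsum]; simp
  have h2 : (1/2 : ENNReal).toReal = 1/2 := by
    rw [ENNReal.toReal_div]; simp
  have h3 : (volume sset).toReal = 41 / 2 := by rw [h2] at h1; linarith
  rw [← ENNReal.ofReal_toReal hfin, h3, ENNReal.ofReal_div_of_pos (by norm_num)]
  norm_num

end Fr

/-- the union of 8 lines relevant to piece boundaries -/
def lines : Set E2 :=
  {p | p 0 = 1} ∪ {p | p 0 = 2} ∪ {p | p 0 = 3} ∪ {p | p 0 = 4} ∪ {p | p 0 = 5} ∪
  {p | p 0 = 6} ∪ {p | p 1 = 1} ∪ {p | p 1 = 2}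

lemma interior_lines : interior lines = ∅ := by
  rw [Set.eq_empty_iff_forall_notMem]
  intro p hp
  rw [mem_interior_iff_mem_nhds, Metric.mem_nhds_iff] at hp
  obtain ⟨ε, hε, hball⟩ := hp
  have hF : (Set.Finite {1 - p 0, 2 - p 0, 3 - p 0, 4 - p 0, 5 - p 0, 6 - p 0,
      1 - p 1, 2 - p 1}) := Set.toFinite _
  have hinf : (Set.Ioo (0:ℝ) (ε/2)).Infinite := Set.Ioo_infinite (by linarith)
  obtain ⟨δ, hδ⟩ := (hinf.diff hF).nonempty
  obtain ⟨⟨hδ0, hδε⟩, hδF⟩ := hδ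
  have hq : pt (p 0 + δ) (p 1 + δ) ∈ Metric.ball p ε := by
    rw [Metric.mem_ball, dist_pt]
    simp only [pt_zero, pt_one]
    have h1 : (p 0 + δ - p 0) ^ 2 + (p 1 + δ - p 1) ^ 2 = 2 * δ ^ 2 := by ring
    rw [h1]
    have h2 : Real.sqrt (2 * δ ^ 2) ≤ Real.sqrt ((2 * δ) ^ 2) :=
      Real.sqrt_le_sqrt (by nlinarith)
    rw [Real.sqrt_sq (by linarith)] at h2
    linarith
  have := hball hq
  simp only [lines, Set.mem_union, Set.mem_setOf_eq, pt_zero, pt_one] at this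
  apply hδF
  simp only [Set.mem_insert_iff, Set.mem_singleton_iff]
  rcases this with (((((((h | h) | h) | h) | h) | h) | h) | h)
  · exact Or.inl (by linarith)
  · exact Or.inr (Or.inl (by linarith))
  · exact Or.inr (Or.inr (Or.inl (by linarith)))
  · exact Or.inr (Or.inr (Or.inr (Or.inl (by linarith))))
  · exact Or.inr (Or.inr (Or.inr (Or.inr (Or.inl (by linarith)))))
  · exact Or.inr (Or.inr (Or.inr (Or.inr (Or.inr (Or.inl (by linarith))))))
  · exact Or.inr (Or.inr (Or.inr (Or.inr (Or.inr (Or.inr (Or.inl (by linarith)))))))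
  · exact Or.inr (Or.inr (Or.inr (Or.inr (Or.inr (Or.inr (Or.inr (by linarith)))))))

lemma disj_of_lines {X Y : Set E2} (h : X ∩ Y ⊆ lines) :
    Disjoint (interior X) (interior Y) := by
  rw [Set.disjoint_iff_inter_eq_empty, ← interior_inter]
  exact Set.eq_empty_of_subset_empty ((interior_mono h).trans interior_lines.subset)


lemma vol_transfer (B : Set (ℝ × ℝ)) (hB : MeasurableSet B) :
    volume {p : E2 | (p 0, p 1) ∈ B} = volume B := by
  have h1 := (MeasureTheory.volume_preserving_finTwoArrow ℝ).comp
    (EuclideanSpace.volume_preserving_symm_measurableEquiv_toLp (Fin 2))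
  exact h1.measure_preimage hB.nullMeasurableSet


lemma piece0_sub : piece0 ⊆ Sset := by
  intro p hp
  simp only [piece0, Set.mem_setOf_eq] at hp
  rcases hp with ⟨a1, a2, a3, a4⟩ | ⟨a1, a2, a3, a4⟩ <;>
    exact ⟨by linarith, by linarith, by linarith, by linarith, by linarith⟩

lemma piece0_tri (p : E2) (hp : p ∈ piece0) (h1 : p 0 < 1) (h2 : 2 < p 1) : False := by
  simp only [piece0, Set.mem_setOf_eq] at hp
  rcases hp with ⟨a1, a2, a3, a4⟩ | ⟨a1, a2, a3, a4⟩ <;> linarith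

lemma piece1_sub : piece1 ⊆ Sset := by
  intro p hp
  simp only [piece1, Set.mem_setOf_eq] at hp
  rcases hp with ⟨a1, a2, a3, a4⟩ | ⟨a1, a2, a3, a4⟩ <;>
    exact ⟨by linarith, by linarith, by linarith, by linarith, by linarith⟩

lemma piece1_tri (p : E2) (hp : p ∈ piece1) (h1 : p 0 < 1) (h2 : 2 < p 1) : False := by
  simp only [piece1, Set.mem_setOf_eq] at hp
  rcases hp with ⟨a1, a2, a3, a4⟩ | ⟨a1, a2, a3, a4⟩ <;> linarith

lemma piece2_sub : piece2 ⊆ Sset := by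
  intro p hp
  simp only [piece2, Set.mem_setOf_eq] at hp
  rcases hp with ⟨a1, a2, a3, a4⟩ | ⟨a1, a2, a3, a4⟩ <;>
    exact ⟨by linarith, by linarith, by linarith, by linarith, by linarith⟩

lemma piece2_tri (p : E2) (hp : p ∈ piece2) (h1 : p 0 < 1) (h2 : 2 < p 1) : False := by
  simp only [piece2, Set.mem_setOf_eq] at hp
  rcases hp with ⟨a1, a2, a3, a4⟩ | ⟨a1, a2, a3, a4⟩ <;> linarith

lemma piece3_sub : piece3 ⊆ Sset := by
  intro p hp
  simp only [piece3, Set.mem_setOf_eq] at hp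
  rcases hp with ⟨a1, a2, a3, a4⟩ | ⟨a1, a2, a3, a4⟩ <;>
    exact ⟨by linarith, by linarith, by linarith, by linarith, by linarith⟩

lemma piece3_tri (p : E2) (hp : p ∈ piece3) (h1 : p 0 < 1) (h2 : 2 < p 1) : False := by
  simp only [piece3, Set.mem_setOf_eq] at hp
  rcases hp with ⟨a1, a2, a3, a4⟩ | ⟨a1, a2, a3, a4⟩ <;> linarith

lemma piece4_sub : piece4 ⊆ Sset := by
  intro p hp
  simp only [piece4, Set.mem_setOf_eq] at hp
  rcases hp with ⟨a1, a2, a3, a4⟩ | ⟨a1, a2, a3, a4⟩ <;>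
    exact ⟨by linarith, by linarith, by linarith, by linarith, by linarith⟩

lemma piece4_tri (p : E2) (hp : p ∈ piece4) (h1 : p 0 < 1) (h2 : 2 < p 1) : False := by
  simp only [piece4, Set.mem_setOf_eq] at hp
  rcases hp with ⟨a1, a2, a3, a4⟩ | ⟨a1, a2, a3, a4⟩ <;> linarith

lemma inc01 : piece0 ∩ piece1 ⊆ lines := by
  rintro p ⟨hX, hY⟩
  simp only [piece0, piece1, Set.mem_setOf_eq] at hX hY
  simp only [lines, Set.mem_union, Set.mem_setOf_eq]
  rcases hX with ⟨a1, a2, a3, a4⟩ | ⟨a1, a2, a3, a4⟩ <;>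
    rcases hY with ⟨b1, b2, b3, b4⟩ | ⟨b1, b2, b3, b4⟩ <;>
    first
      | (exfalso; linarith)
      | exact Or.inl (Or.inl (Or.inl (Or.inl (Or.inl (Or.inl (Or.inl (by linarith)))))))
      | exact Or.inl (Or.inl (Or.inl (Or.inl (Or.inl (Or.inl (Or.inr (by linarith)))))))
      | exact Or.inl (Or.inl (Or.inl (Or.inl (Or.inl (Or.inr (by linarith))))))
      | exact Or.inl (Or.inl (Or.inl (Or.inl (Or.inr (by linarith)))))
      | exact Or.inl (Or.inl (Or.inl (Or.inr (by linarith))))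
      | exact Or.inl (Or.inl (Or.inr (by linarith)))
      | exact Or.inl (Or.inr (by linarith))
      | exact Or.inr (by linarith)

lemma inc02 : piece0 ∩ piece2 ⊆ lines := by
  rintro p ⟨hX, hY⟩
  simp only [piece0, piece2, Set.mem_setOf_eq] at hX hY
  simp only [lines, Set.mem_union, Set.mem_setOf_eq]
  rcases hX with ⟨a1, a2, a3, a4⟩ | ⟨a1, a2, a3, a4⟩ <;>
    rcases hY with ⟨b1, b2, b3, b4⟩ | ⟨b1, b2, b3, b4⟩ <;>
    first
      | (exfalso; linarith)
      | exact Or.inl (Or.inl (Or.inl (Or.inl (Or.inl (Or.inl (Or.inl (by linarith)))))))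
      | exact Or.inl (Or.inl (Or.inl (Or.inl (Or.inl (Or.inl (Or.inr (by linarith)))))))
      | exact Or.inl (Or.inl (Or.inl (Or.inl (Or.inl (Or.inr (by linarith))))))
      | exact Or.inl (Or.inl (Or.inl (Or.inl (Or.inr (by linarith)))))
      | exact Or.inl (Or.inl (Or.inl (Or.inr (by linarith))))
      | exact Or.inl (Or.inl (Or.inr (by linarith)))
      | exact Or.inl (Or.inr (by linarith))
      | exact Or.inr (by linarith)

lemma inc03 : piece0 ∩ piece3 ⊆ lines := by
  rintro p ⟨hX, hY⟩
  simp only [piece0, piece3, Set.mem_setOf_eq] at hX hY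
  simp only [lines, Set.mem_union, Set.mem_setOf_eq]
  rcases hX with ⟨a1, a2, a3, a4⟩ | ⟨a1, a2, a3, a4⟩ <;>
    rcases hY with ⟨b1, b2, b3, b4⟩ | ⟨b1, b2, b3, b4⟩ <;>
    first
      | (exfalso; linarith)
      | exact Or.inl (Or.inl (Or.inl (Or.inl (Or.inl (Or.inl (Or.inl (by linarith)))))))
      | exact Or.inl (Or.inl (Or.inl (Or.inl (Or.inl (Or.inl (Or.inr (by linarith)))))))
      | exact Or.inl (Or.inl (Or.inl (Or.inl (Or.inl (Or.inr (by linarith))))))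
      | exact Or.inl (Or.inl (Or.inl (Or.inl (Or.inr (by linarith)))))
      | exact Or.inl (Or.inl (Or.inl (Or.inr (by linarith))))
      | exact Or.inl (Or.inl (Or.inr (by linarith)))
      | exact Or.inl (Or.inr (by linarith))
      | exact Or.inr (by linarith)

lemma inc04 : piece0 ∩ piece4 ⊆ lines := by
  rintro p ⟨hX, hY⟩
  simp only [piece0, piece4, Set.mem_setOf_eq] at hX hY
  simp only [lines, Set.mem_union, Set.mem_setOf_eq]
  rcases hX with ⟨a1, a2, a3, a4⟩ | ⟨a1, a2, a3, a4⟩ <;>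
    rcases hY with ⟨b1, b2, b3, b4⟩ | ⟨b1, b2, b3, b4⟩ <;>
    first
      | (exfalso; linarith)
      | exact Or.inl (Or.inl (Or.inl (Or.inl (Or.inl (Or.inl (Or.inl (by linarith)))))))
      | exact Or.inl (Or.inl (Or.inl (Or.inl (Or.inl (Or.inl (Or.inr (by linarith)))))))
      | exact Or.inl (Or.inl (Or.inl (Or.inl (Or.inl (Or.inr (by linarith))))))
      | exact Or.inl (Or.inl (Or.inl (Or.inl (Or.inr (by linarith)))))
      | exact Or.inl (Or.inl (Or.inl (Or.inr (by linarith))))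
      | exact Or.inl (Or.inl (Or.inr (by linarith)))
      | exact Or.inl (Or.inr (by linarith))
      | exact Or.inr (by linarith)

lemma inc12 : piece1 ∩ piece2 ⊆ lines := by
  rintro p ⟨hX, hY⟩
  simp only [piece1, piece2, Set.mem_setOf_eq] at hX hY
  simp only [lines, Set.mem_union, Set.mem_setOf_eq]
  rcases hX with ⟨a1, a2, a3, a4⟩ | ⟨a1, a2, a3, a4⟩ <;>
    rcases hY with ⟨b1, b2, b3, b4⟩ | ⟨b1, b2, b3, b4⟩ <;>
    first
      | (exfalso; linarith)
      | exact Or.inl (Or.inl (Or.inl (Or.inl (Or.inl (Or.inl (Or.inl (by linarith)))))))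
      | exact Or.inl (Or.inl (Or.inl (Or.inl (Or.inl (Or.inl (Or.inr (by linarith)))))))
      | exact Or.inl (Or.inl (Or.inl (Or.inl (Or.inl (Or.inr (by linarith))))))
      | exact Or.inl (Or.inl (Or.inl (Or.inl (Or.inr (by linarith)))))
      | exact Or.inl (Or.inl (Or.inl (Or.inr (by linarith))))
      | exact Or.inl (Or.inl (Or.inr (by linarith)))
      | exact Or.inl (Or.inr (by linarith))
      | exact Or.inr (by linarith)

lemma inc13 : piece1 ∩ piece3 ⊆ lines := by
  rintro p ⟨hX, hY⟩
  simp only [piece1, piece3, Set.mem_setOf_eq] at hX hY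
  simp only [lines, Set.mem_union, Set.mem_setOf_eq]
  rcases hX with ⟨a1, a2, a3, a4⟩ | ⟨a1, a2, a3, a4⟩ <;>
    rcases hY with ⟨b1, b2, b3, b4⟩ | ⟨b1, b2, b3, b4⟩ <;>
    first
      | (exfalso; linarith)
      | exact Or.inl (Or.inl (Or.inl (Or.inl (Or.inl (Or.inl (Or.inl (by linarith)))))))
      | exact Or.inl (Or.inl (Or.inl (Or.inl (Or.inl (Or.inl (Or.inr (by linarith)))))))
      | exact Or.inl (Or.inl (Or.inl (Or.inl (Or.inl (Or.inr (by linarith))))))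
      | exact Or.inl (Or.inl (Or.inl (Or.inl (Or.inr (by linarith)))))
      | exact Or.inl (Or.inl (Or.inl (Or.inr (by linarith))))
      | exact Or.inl (Or.inl (Or.inr (by linarith)))
      | exact Or.inl (Or.inr (by linarith))
      | exact Or.inr (by linarith)

lemma inc14 : piece1 ∩ piece4 ⊆ lines := by
  rintro p ⟨hX, hY⟩
  simp only [piece1, piece4, Set.mem_setOf_eq] at hX hY
  simp only [lines, Set.mem_union, Set.mem_setOf_eq]
  rcases hX with ⟨a1, a2, a3, a4⟩ | ⟨a1, a2, a3, a4⟩ <;>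
    rcases hY with ⟨b1, b2, b3, b4⟩ | ⟨b1, b2, b3, b4⟩ <;>
    first
      | (exfalso; linarith)
      | exact Or.inl (Or.inl (Or.inl (Or.inl (Or.inl (Or.inl (Or.inl (by linarith)))))))
      | exact Or.inl (Or.inl (Or.inl (Or.inl (Or.inl (Or.inl (Or.inr (by linarith)))))))
      | exact Or.inl (Or.inl (Or.inl (Or.inl (Or.inl (Or.inr (by linarith))))))
      | exact Or.inl (Or.inl (Or.inl (Or.inl (Or.inr (by linarith)))))
      | exact Or.inl (Or.inl (Or.inl (Or.inr (by linarith))))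
      | exact Or.inl (Or.inl (Or.inr (by linarith)))
      | exact Or.inl (Or.inr (by linarith))
      | exact Or.inr (by linarith)

lemma inc23 : piece2 ∩ piece3 ⊆ lines := by
  rintro p ⟨hX, hY⟩
  simp only [piece2, piece3, Set.mem_setOf_eq] at hX hY
  simp only [lines, Set.mem_union, Set.mem_setOf_eq]
  rcases hX with ⟨a1, a2, a3, a4⟩ | ⟨a1, a2, a3, a4⟩ <;>
    rcases hY with ⟨b1, b2, b3, b4⟩ | ⟨b1, b2, b3, b4⟩ <;>
    first
      | (exfalso; linarith)
      | exact Or.inl (Or.inl (Or.inl (Or.inl (Or.inl (Or.inl (Or.inl (by linarith)))))))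
      | exact Or.inl (Or.inl (Or.inl (Or.inl (Or.inl (Or.inl (Or.inr (by linarith)))))))
      | exact Or.inl (Or.inl (Or.inl (Or.inl (Or.inl (Or.inr (by linarith))))))
      | exact Or.inl (Or.inl (Or.inl (Or.inl (Or.inr (by linarith)))))
      | exact Or.inl (Or.inl (Or.inl (Or.inr (by linarith))))
      | exact Or.inl (Or.inl (Or.inr (by linarith)))
      | exact Or.inl (Or.inr (by linarith))
      | exact Or.inr (by linarith)

lemma inc24 : piece2 ∩ piece4 ⊆ lines := by
  rintro p ⟨hX, hY⟩
  simp only [piece2, piece4, Set.mem_setOf_eq] at hX hY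
  simp only [lines, Set.mem_union, Set.mem_setOf_eq]
  rcases hX with ⟨a1, a2, a3, a4⟩ | ⟨a1, a2, a3, a4⟩ <;>
    rcases hY with ⟨b1, b2, b3, b4⟩ | ⟨b1, b2, b3, b4⟩ <;>
    first
      | (exfalso; linarith)
      | exact Or.inl (Or.inl (Or.inl (Or.inl (Or.inl (Or.inl (Or.inl (by linarith)))))))
      | exact Or.inl (Or.inl (Or.inl (Or.inl (Or.inl (Or.inl (Or.inr (by linarith)))))))
      | exact Or.inl (Or.inl (Or.inl (Or.inl (Or.inl (Or.inr (by linarith))))))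
      | exact Or.inl (Or.inl (Or.inl (Or.inl (Or.inr (by linarith)))))
      | exact Or.inl (Or.inl (Or.inl (Or.inr (by linarith))))
      | exact Or.inl (Or.inl (Or.inr (by linarith)))
      | exact Or.inl (Or.inr (by linarith))
      | exact Or.inr (by linarith)

lemma inc34 : piece3 ∩ piece4 ⊆ lines := by
  rintro p ⟨hX, hY⟩
  simp only [piece3, piece4, Set.mem_setOf_eq] at hX hY
  simp only [lines, Set.mem_union, Set.mem_setOf_eq]
  rcases hX with ⟨a1, a2, a3, a4⟩ | ⟨a1, a2, a3, a4⟩ <;>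
    rcases hY with ⟨b1, b2, b3, b4⟩ | ⟨b1, b2, b3, b4⟩ <;>
    first
      | (exfalso; linarith)
      | exact Or.inl (Or.inl (Or.inl (Or.inl (Or.inl (Or.inl (Or.inl (by linarith)))))))
      | exact Or.inl (Or.inl (Or.inl (Or.inl (Or.inl (Or.inl (Or.inr (by linarith)))))))
      | exact Or.inl (Or.inl (Or.inl (Or.inl (Or.inl (Or.inr (by linarith))))))
      | exact Or.inl (Or.inl (Or.inl (Or.inl (Or.inr (by linarith)))))
      | exact Or.inl (Or.inl (Or.inl (Or.inr (by linarith))))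
      | exact Or.inl (Or.inl (Or.inr (by linarith)))
      | exact Or.inl (Or.inr (by linarith))
      | exact Or.inr (by linarith)


set_option maxHeartbeats 1000000 in
/-- Friedman's example: the convex pentagon obtained from a 3×7 rectangle by
chopping off a corner triangle of area 1/2 has area 41/2, and it admits a layout
of 5 mutually congruent L-tetrominoes (each of area 4) with pairwise disjoint
interiors, leaving uncovered area exactly 1/2. -/
theorem friedman_pentagon_five_L_tetrominoes
    (P L : Set (EuclideanSpace ℝ (Fin 2)))
    (hP : P = convexHull ℝ {!₂[0, 0], !₂[7, 0], !₂[7, 3], !₂[1, 3], !₂[0, 2]})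
    (hL : L = {p : EuclideanSpace ℝ (Fin 2) |
                 p 0 ∈ Set.Icc (0 : ℝ) 1 ∧ p 1 ∈ Set.Icc (0 : ℝ) 3} ∪
              {p : EuclideanSpace ℝ (Fin 2) |
                 p 0 ∈ Set.Icc (1 : ℝ) 2 ∧ p 1 ∈ Set.Icc (0 : ℝ) 1}) :
    volume P = 41 / 2 ∧
    ∃ f : Fin 5 → (EuclideanSpace ℝ (Fin 2) ≃ᵢ EuclideanSpace ℝ (Fin 2)),
      (∀ i, f i '' L ⊆ P) ∧
      (∀ i j, i ≠ j → Disjoint (interior (f i '' L)) (interior (f j '' L))) ∧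
      volume (P \ ⋃ i, f i '' L) = 1 / 2 := by
  have hPS : P = Sset := by rw [hP]; exact hull_eq
  constructor
  · rw [hPS]
    have h : Sset = {p : E2 | (p 0, p 1) ∈ Fr.sset} := rfl
    rw [h, vol_transfer _ Fr.sset_meas]
    exact Fr.vol_sset
  · refine ⟨fam, ?_, ?_, ?_⟩
    · intro i
      rw [hPS]
      match i with
      | 0 => rw [image0 L hL]; exact piece0_sub
      | 1 => rw [image1 L hL]; exact piece1_sub
      | 2 => rw [image2 L hL]; exact piece2_sub
      | 3 => rw [image3 L hL]; exact piece3_sub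
      | 4 => rw [image4 L hL]; exact piece4_sub
    · intro i j hij
      match i, j with
      | 0, 0 => exact absurd rfl hij
      | 0, 1 => rw [image0 L hL, image1 L hL]; exact disj_of_lines inc01
      | 0, 2 => rw [image0 L hL, image2 L hL]; exact disj_of_lines inc02
      | 0, 3 => rw [image0 L hL, image3 L hL]; exact disj_of_lines inc03
      | 0, 4 => rw [image0 L hL, image4 L hL]; exact disj_of_lines inc04
      | 1, 0 => rw [image1 L hL, image0 L hL]; exact (disj_of_lines inc01).symm
      | 1, 1 => exact absurd rfl hij
      | 1, 2 => rw [image1 L hL, image2 L hL]; exact disj_of_lines inc12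
      | 1, 3 => rw [image1 L hL, image3 L hL]; exact disj_of_lines inc13
      | 1, 4 => rw [image1 L hL, image4 L hL]; exact disj_of_lines inc14
      | 2, 0 => rw [image2 L hL, image0 L hL]; exact (disj_of_lines inc02).symm
      | 2, 1 => rw [image2 L hL, image1 L hL]; exact (disj_of_lines inc12).symm
      | 2, 2 => exact absurd rfl hij
      | 2, 3 => rw [image2 L hL, image3 L hL]; exact disj_of_lines inc23
      | 2, 4 => rw [image2 L hL, image4 L hL]; exact disj_of_lines inc24
      | 3, 0 => rw [image3 L hL, image0 L hL]; exact (disj_of_lines inc03).symm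
      | 3, 1 => rw [image3 L hL, image1 L hL]; exact (disj_of_lines inc13).symm
      | 3, 2 => rw [image3 L hL, image2 L hL]; exact (disj_of_lines inc23).symm
      | 3, 3 => exact absurd rfl hij
      | 3, 4 => rw [image3 L hL, image4 L hL]; exact disj_of_lines inc34
      | 4, 0 => rw [image4 L hL, image0 L hL]; exact (disj_of_lines inc04).symm
      | 4, 1 => rw [image4 L hL, image1 L hL]; exact (disj_of_lines inc14).symm
      | 4, 2 => rw [image4 L hL, image2 L hL]; exact (disj_of_lines inc24).symm
      | 4, 3 => rw [image4 L hL, image3 L hL]; exact (disj_of_lines inc34).symm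
      | 4, 4 => exact absurd rfl hij
    · have hset : P \ (⋃ i, fam i '' L) = {p : E2 | (p 0, p 1) ∈ Fr.tset} := by
        rw [hPS]
        ext p
        simp only [Set.mem_diff, Set.mem_iUnion, not_exists, Set.mem_setOf_eq]
        constructor
        · rintro ⟨⟨s1, s2, s3, s4, s5⟩, hn⟩
          rcases le_or_gt 1 (p 0) with h | h
          · obtain ⟨i, hi⟩ := cover L hL p s1 s2 s3 s4 (Or.inr h)
            exact absurd hi (hn i)
          · rcases le_or_gt (p 1) 2 with h' | h'
            · obtain ⟨i, hi⟩ := cover L hL p s1 s2 s3 s4 (Or.inl h')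
              exact absurd hi (hn i)
            · exact ⟨s1, h, h', s5⟩
        · rintro ⟨t1, t2, t3, t4⟩
          refine ⟨⟨t1, by linarith, by linarith, by linarith, t4⟩, ?_⟩
          intro i
          match i with
          | 0 => rw [image0 L hL]; intro hp; exact piece0_tri p hp t2 t3
          | 1 => rw [image1 L hL]; intro hp; exact piece1_tri p hp t2 t3
          | 2 => rw [image2 L hL]; intro hp; exact piece2_tri p hp t2 t3
          | 3 => rw [image3 L hL]; intro hp; exact piece3_tri p hp t2 t3
          | 4 => rw [image4 L hL]; intro hp; exact piece4_tri p hp t2 t3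
      rw [hset, vol_transfer _ Fr.tset_meas]
      exact Fr.vol_tset
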